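/- Fix an integer N ≥ 2 and a real number q with 0 < q < 1. Let s ∈ ℂ \ {0} and let m ≥ 1 be an integer. Then for every x ∈ ℂ \ {0} at which all theta factors occurring on either side are nonzero, F_m(q^{-N} s^{-m} x ; s) = F_{-m}(x ; s)^{-1}. Equivalently, if s, t ∈ ℂ \ {0} satisfy the surface condition s^m t^n = q^{-N} for some integer n, then F_m(t^n x ; s) = F_{-m}(x ; s)^{-1}. -/

import Mathlib

/-- Infinite `q`-Pochhammer symbol `(z;p)_∞ = ∏_{j≥0} (1 − z pʲ)`. -/
noncomputable def qPoch (z p : ℂ) : ℂ := ∏' j : ℕ, (1 - z * p ^ j)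

/-- Jacobi Θ function `Θ_p(z) = (z;p)_∞ (p z⁻¹;p)_∞ (p;p)_∞`. -/
noncomputable def ThetaF (p z : ℂ) : ℂ := qPoch z p * qPoch (p * z⁻¹) p * qPoch p p

/-- The function
`U(z) = q^{2/N−2} · Θ_{q^{2N}}(q²z²) Θ_{q^{2N}}(q²z⁻²) / (Θ_{q^{2N}}(z²) Θ_{q^{2N}}(z⁻²))`. -/
noncomputable def Ufun (N : ℕ) (q : ℝ) (z : ℂ) : ℂ :=
  ((q ^ ((2 : ℝ) / N - 2) : ℝ) : ℂ) *
    (ThetaF ((q : ℂ) ^ (2 * N)) ((q : ℂ) ^ 2 * z ^ 2) *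
      ThetaF ((q : ℂ) ^ (2 * N)) ((q : ℂ) ^ 2 * z⁻¹ ^ 2)) /
    (ThetaF ((q : ℂ) ^ (2 * N)) (z ^ 2) * ThetaF ((q : ℂ) ^ (2 * N)) (z⁻¹ ^ 2))

/-- All four theta factors occurring in `U(z)` are nonzero. -/
def thetaReg (N : ℕ) (q : ℝ) (z : ℂ) : Prop :=
  ThetaF ((q : ℂ) ^ (2 * N)) ((q : ℂ) ^ 2 * z ^ 2) ≠ 0 ∧
  ThetaF ((q : ℂ) ^ (2 * N)) ((q : ℂ) ^ 2 * z⁻¹ ^ 2) ≠ 0 ∧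
  ThetaF ((q : ℂ) ^ (2 * N)) (z ^ 2) ≠ 0 ∧
  ThetaF ((q : ℂ) ^ (2 * N)) (z⁻¹ ^ 2) ≠ 0

/-- `F_a(x;s) = ∏_{k=0}^{a−1} U(sᵏx)` for `a > 0`, `F₀ = 1`, and
`F_a(x;s) = ∏_{k=1}^{−a} U(s⁻ᵏx)⁻¹` for `a < 0`. -/
noncomputable def Ffun (N : ℕ) (q : ℝ) (s x : ℂ) (a : ℤ) : ℂ :=
  if 0 < a then ∏ k ∈ Finset.range a.toNat, Ufun N q (s ^ (k : ℕ) * x)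
  else ∏ k ∈ Finset.range (-a).toNat, (Ufun N q (s ^ (-(k : ℤ) - 1) * x))⁻¹

/-- The structure function
`Y_{m,n}(x;s,t) = F_n(x;t) F_{−n}(x;t) / (F_m(x;s) F_{−m}(x;s))`. -/
noncomputable def Yfun (N : ℕ) (q : ℝ) (s t x : ℂ) (m n : ℤ) : ℂ :=
  Ffun N q t x n * Ffun N q t x (-n) / (Ffun N q s x m * Ffun N q s x (-m))

open Filter in
/-- If one factor vanishes, the infinite product has value `0`. -/
lemma hasProd_zero_of_exists {f : ℕ → ℂ} {j0 : ℕ} (h : f j0 = 0) : HasProd f 0 := by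
  have : ∀ᶠ s in (atTop : Filter (Finset ℕ)), ∏ i ∈ s, f i = 0 := by
    filter_upwards [Filter.eventually_ge_atTop ({j0} : Finset ℕ)] with s hs
    exact Finset.prod_eq_zero (hs (Finset.mem_singleton_self j0)) h
  exact Tendsto.congr' (this.mono fun s hs => hs.symm) tendsto_const_nhds

open Filter in
/-- Multipliability of the `q`-Pochhammer product. -/
lemma multipliable_qPoch (z p : ℂ) (hp : ‖p‖ < 1) :
    Multipliable (fun j : ℕ => 1 - z * p ^ j) := by
  by_cases hz : ∃ j, 1 - z * p ^ j = 0
  · obtain ⟨j0, hj0⟩ := hz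
    exact ⟨0, hasProd_zero_of_exists hj0⟩
  · push_neg at hz
    refine Complex.multipliable_of_summable_log (f := fun j => 1 - z * p ^ j) ?_
    have hsum : Summable (fun j : ℕ => (3/2 : ℝ) * (‖z‖ * ‖p‖ ^ j)) :=
      ((summable_geometric_of_lt_one (norm_nonneg p) hp).mul_left ‖z‖).mul_left _
    refine Summable.of_norm_bounded_eventually_nat hsum ?_
    have hlim : Filter.Tendsto (fun j : ℕ => ‖z‖ * ‖p‖ ^ j) atTop (nhds 0) := by
      simpa using (tendsto_pow_atTop_nhds_zero_of_norm_lt_one (by simpa using hp)).const_mul ‖z‖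
    filter_upwards [hlim.eventually_le_const (by norm_num : (0:ℝ) < 1/2)] with j hj
    have h1 : ‖-(z * p ^ j)‖ ≤ 1/2 := by
      rw [norm_neg, norm_mul, norm_pow]; exact hj
    have := Complex.norm_log_one_add_half_le_self h1
    rw [show (1 : ℂ) + -(z * p ^ j) = 1 - z * p ^ j by ring] at this
    calc ‖Complex.log (1 - z * p ^ j)‖ ≤ 3/2 * ‖-(z * p ^ j)‖ := this
      _ ≤ 3/2 * (‖z‖ * ‖p‖ ^ j) := by rw [norm_neg, norm_mul, norm_pow]

/-- Splitting off the first factor of the `q`-Pochhammer symbol. -/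
lemma qPoch_succ (z p : ℂ) (hp : ‖p‖ < 1) :
    qPoch z p = (1 - z) * qPoch (p * z) p := by
  have hm : Multipliable (fun j : ℕ => 1 - z * p ^ (j + 1)) :=
    (multipliable_qPoch (p * z) p hp).congr fun j => by ring
  have h : ∏' b : ℕ, (1 - z * p ^ b) = (1 - z * p ^ 0) * ∏' b : ℕ, (1 - z * p ^ (b + 1)) :=
    tprod_eq_zero_mul' hm
  rw [qPoch, h, pow_zero, mul_one, qPoch]
  congr 1
  exact tprod_congr fun j => by ring

/-- Quasi-periodicity `Θ_p(pw) = −w⁻¹ Θ_p(w)`. -/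
lemma ThetaF_mul_p (p w : ℂ) (hp : ‖p‖ < 1) (hp0 : p ≠ 0) (hw : w ≠ 0) :
    ThetaF p (p * w) = -w⁻¹ * ThetaF p w := by
  have h1 : p * (p * w)⁻¹ = w⁻¹ := by field_simp
  rw [ThetaF, ThetaF, h1, qPoch_succ w p hp, qPoch_succ w⁻¹ p hp]
  have h2 : (1 : ℂ) - w⁻¹ = -w⁻¹ * (1 - w) := by field_simp; ring
  rw [h2]; ring

/-- Quasi-periodicity `Θ_p(p⁻¹w) = −p⁻¹w Θ_p(w)`. -/
lemma ThetaF_mul_p_inv (p w : ℂ) (hp : ‖p‖ < 1) (hp0 : p ≠ 0) (hw : w ≠ 0) :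
    ThetaF p (p⁻¹ * w) = -(p⁻¹ * w) * ThetaF p w := by
  have h := ThetaF_mul_p p (p⁻¹ * w) hp hp0 (by simp [hp0, hw])
  rw [show p * (p⁻¹ * w) = w by field_simp] at h
  rw [h]
  field_simp

/-- `U(q^{-N} z) = U(z)`. -/
lemma Ufun_shift (N : ℕ) (hN : 1 ≤ N) (q : ℝ) (hq0 : 0 < q) (hq1 : q < 1)
    (z : ℂ) (hz : z ≠ 0) :
    Ufun N q ((q : ℂ) ^ (-(N : ℤ)) * z) = Ufun N q z := by
  set p : ℂ := (q : ℂ) ^ (2 * N) with hpdef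
  have hqc : (q : ℂ) ≠ 0 := by
    exact_mod_cast hq0.ne'
  have hp0 : p ≠ 0 := pow_ne_zero _ hqc
  have hp : ‖p‖ < 1 := by
    rw [hpdef, norm_pow, Complex.norm_real, Real.norm_of_nonneg hq0.le]
    exact pow_lt_one₀ hq0.le hq1 (by omega)
  have e : ((q : ℂ) ^ (-(N : ℤ))) ^ 2 = p⁻¹ := by
    rw [hpdef, ← zpow_natCast ((q:ℂ) ^ (-(N : ℤ))) 2, ← zpow_mul,
      ← zpow_natCast (q : ℂ) (2 * N), ← zpow_neg]
    congr 1
    push_cast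
    ring
  have h1 : ((q : ℂ) ^ (-(N : ℤ)) * z) ^ 2 = p⁻¹ * z ^ 2 := by
    rw [mul_pow, e]
  have h2 : ((q : ℂ) ^ (-(N : ℤ)) * z)⁻¹ ^ 2 = p * z⁻¹ ^ 2 := by
    rw [mul_inv, mul_pow, inv_pow, e, inv_inv]
  have hz2 : z ^ 2 ≠ 0 := pow_ne_zero _ hz
  have hzi2 : z⁻¹ ^ 2 ≠ 0 := pow_ne_zero _ (inv_ne_zero hz)
  have hq2 : (q : ℂ) ^ 2 ≠ 0 := pow_ne_zero _ hqc
  rw [Ufun, Ufun, h1, h2,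
    show (q : ℂ) ^ 2 * (p⁻¹ * z ^ 2) = p⁻¹ * ((q : ℂ) ^ 2 * z ^ 2) by ring,
    show (q : ℂ) ^ 2 * (p * z⁻¹ ^ 2) = p * ((q : ℂ) ^ 2 * z⁻¹ ^ 2) by ring,
    ThetaF_mul_p_inv p _ hp hp0 (mul_ne_zero hq2 hz2),
    ThetaF_mul_p p _ hp hp0 (mul_ne_zero hq2 hzi2),
    ThetaF_mul_p_inv p _ hp hp0 hz2,
    ThetaF_mul_p p _ hp hp0 hzi2]
  set A := ThetaF p ((q : ℂ) ^ 2 * z ^ 2)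
  set B := ThetaF p ((q : ℂ) ^ 2 * z⁻¹ ^ 2)
  set C := ThetaF p (z ^ 2)
  set D := ThetaF p (z⁻¹ ^ 2)
  set K : ℂ := ((q ^ ((2 : ℝ) / N - 2) : ℝ) : ℂ)
  have hc : p⁻¹ * z ^ 4 ≠ 0 := mul_ne_zero (inv_ne_zero hp0) (pow_ne_zero _ hz)
  have hnum : K * (-(p⁻¹ * ((q : ℂ) ^ 2 * z ^ 2)) * A * (-((q : ℂ) ^ 2 * z⁻¹ ^ 2)⁻¹ * B))
      = (p⁻¹ * z ^ 4) * (K * (A * B)) := by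
    field_simp
  have hden : -(p⁻¹ * z ^ 2) * C * (-(z⁻¹ ^ 2)⁻¹ * D) = (p⁻¹ * z ^ 4) * (C * D) := by
    field_simp
  rw [hnum, hden, mul_div_mul_left _ _ hc]

/-- On the surface `s^m t^n = q^{−N}`, one has `F_m(q^{−N} s^{−m} x ; s) = F_{−m}(x;s)⁻¹`
(equivalently `F_m(tⁿ x; s) = F_{−m}(x;s)⁻¹`), at every nonzero point where all theta
factors occurring on either side are nonzero. -/
theorem Ffun_shift_inv (N : ℕ) (hN : 2 ≤ N) (q : ℝ) (hq0 : 0 < q) (hq1 : q < 1)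
    (s : ℂ) (hs : s ≠ 0) (m : ℤ) (hm : 1 ≤ m) (x : ℂ) (hx : x ≠ 0)
    (hreg : ∀ k ∈ Finset.range m.toNat,
      thetaReg N q (s ^ (k : ℤ) * ((q : ℂ) ^ (-(N : ℤ)) * s ^ (-m) * x)))
    (hreg' : ∀ k ∈ Finset.range m.toNat, thetaReg N q (s ^ (-(k : ℤ) - 1) * x)) :
    Ffun N q s ((q : ℂ) ^ (-(N : ℤ)) * s ^ (-m) * x) m = (Ffun N q s x (-m))⁻¹ := by
  set n : ℕ := m.toNat with hndef
  have hn : (n : ℤ) = m := Int.toNat_of_nonneg (by linarith)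
  rw [Ffun, Ffun, if_pos (by linarith : (0 : ℤ) < m), if_neg (by omega : ¬(0 : ℤ) < -m),
    neg_neg]
  rw [Finset.prod_inv_distrib, inv_inv]
  rw [← Finset.prod_range_reflect
    (fun k => Ufun N q (s ^ (k : ℕ) * ((q : ℂ) ^ (-(N : ℤ)) * s ^ (-m) * x))) n]
  refine Finset.prod_congr rfl fun k hk => ?_
  have hk' : k < n := Finset.mem_range.1 hk
  have e1 : s ^ ((n - 1 - k : ℕ)) = s ^ ((m - 1 - (k : ℤ))) := by
    rw [← zpow_natCast]
    congr 1
    omega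
  have e2 : s ^ ((n - 1 - k : ℕ)) * ((q : ℂ) ^ (-(N : ℤ)) * s ^ (-m) * x)
      = (q : ℂ) ^ (-(N : ℤ)) * (s ^ (-(k : ℤ) - 1) * x) := by
    have e3 : s ^ (m - 1 - (k : ℤ)) * s ^ (-m) = s ^ (-(k : ℤ) - 1) := by
      rw [← zpow_add₀ hs]
      congr 1
      ring
    rw [e1, show s ^ (m - 1 - (k : ℤ)) * ((q : ℂ) ^ (-(N : ℤ)) * s ^ (-m) * x)
        = (q : ℂ) ^ (-(N : ℤ)) * (s ^ (m - 1 - (k : ℤ)) * s ^ (-m) * x) from by ring,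
      e3]
  rw [e2]
  exact Ufun_shift N (by omega) q hq0 hq1 (s ^ (-(k : ℤ) - 1) * x)
    (mul_ne_zero (zpow_ne_zero _ hs) hx)
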